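/- For a prime p and a positive integer r, the number of pairs (i,j) with 0 ≤ i, j < p^r such that binomial(j,i) is not divisible by p equals (p(p+1)/2)^r. -/

import Mathlib

open Finset

private lemma dvd_choose_lucas_iff (p : ℕ) (hp : p.Prime) (i j : ℕ) :
    p ∣ j.choose i ↔ (p ∣ (j % p).choose (i % p) ∨ p ∣ (j / p).choose (i / p)) := by
  haveI : Fact p.Prime := ⟨hp⟩
  have h := Choose.choose_modEq_choose_mod_mul_choose_div_nat (n := j) (k := i) (p := p)
  have key : p ∣ j.choose i ↔ p ∣ ((j % p).choose (i % p) * (j / p).choose (i / p)) := by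
    constructor
    · intro hd
      exact (Nat.modEq_zero_iff_dvd).mp ((h.symm).trans (Nat.modEq_zero_iff_dvd.mpr hd))
    · intro hd
      exact (Nat.modEq_zero_iff_dvd).mp (h.trans (Nat.modEq_zero_iff_dvd.mpr hd))
  rw [key, hp.dvd_mul]

private lemma base_case (p : ℕ) (hp : p.Prime) :
    ((Finset.range p ×ˢ Finset.range p).filter
      (fun ij => ¬ p ∣ (ij.2).choose ij.1)).card = p * (p + 1) / 2 := by
  have hfe : ((Finset.range p ×ˢ Finset.range p).filter
      (fun ij => ¬ p ∣ (ij.2).choose ij.1)) =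
      ((Finset.range p ×ˢ Finset.range p).filter (fun ij => ij.1 ≤ ij.2)) := by
    apply Finset.filter_congr
    intro ij hij
    simp only [mem_product, mem_range] at hij
    constructor
    · intro hnd
      by_contra hlt
      push_neg at hlt
      exact hnd (by simp [Nat.choose_eq_zero_of_lt hlt])
    · intro hle hd
      have h1 : (ij.2).choose ij.1 ∣ (ij.2).factorial := by
        have := Nat.choose_mul_factorial_mul_factorial hle
        exact ⟨(ij.1).factorial * (ij.2 - ij.1).factorial, by rw [← this]; ring⟩
      have h2 : p ∣ (ij.2).factorial := hd.trans h1
      have := (Nat.Prime.dvd_factorial hp).mp h2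
      omega
  rw [hfe, Finset.card_filter, Finset.sum_product_right]
  have hinner : ∀ j ∈ Finset.range p, (∑ i ∈ Finset.range p, if (i, j).1 ≤ (i, j).2 then 1 else 0)
      = j + 1 := by
    intro j hj
    rw [← Finset.card_filter]
    have : (Finset.range p).filter (fun i => (i, j).1 ≤ (i, j).2) = Finset.range (j + 1) := by
      ext x
      simp only [Finset.mem_filter, Finset.mem_range] at *
      omega
    rw [this, Finset.card_range]
  rw [Finset.sum_congr rfl hinner]
  have : ∑ j ∈ Finset.range p, (j + 1) = ∑ j ∈ Finset.range (p + 1), j := by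
    rw [Finset.sum_range_succ']; simp
  rw [this, Finset.sum_range_id, mul_comm]
  simp

private lemma step_case (p : ℕ) (hp : p.Prime) (r : ℕ) :
    ((Finset.range (p ^ (r + 1)) ×ˢ Finset.range (p ^ (r + 1))).filter
      (fun ij => ¬ p ∣ (ij.2).choose ij.1)).card =
    ((Finset.range p ×ˢ Finset.range p).filter
      (fun ij => ¬ p ∣ (ij.2).choose ij.1)).card *
    ((Finset.range (p ^ r) ×ˢ Finset.range (p ^ r)).filter
      (fun ij => ¬ p ∣ (ij.2).choose ij.1)).card := by
  have hp0 : 0 < p := hp.pos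
  rw [← Finset.card_product]
  apply Finset.card_nbij' (i := fun ij => ((ij.1 % p, ij.2 % p), (ij.1 / p, ij.2 / p)))
    (j := fun ab => (ab.1.1 + p * ab.2.1, ab.1.2 + p * ab.2.2))
  · rintro ⟨i, j⟩ hij
    change (i, j) ∈ (_ : Finset (ℕ × ℕ)) at hij
    simp only [Finset.mem_coe, Finset.mem_filter, Finset.mem_product, Finset.mem_range] at hij ⊢
    obtain ⟨⟨hi, hj⟩, hnd⟩ := hij
    rw [dvd_choose_lucas_iff p hp] at hnd
    push_neg at hnd
    refine ⟨⟨⟨Nat.mod_lt _ hp0, Nat.mod_lt _ hp0⟩, hnd.1⟩, ⟨?_, ?_⟩, hnd.2⟩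
    · rw [Nat.div_lt_iff_lt_mul hp0, ← pow_succ]; exact hi
    · rw [Nat.div_lt_iff_lt_mul hp0, ← pow_succ]; exact hj
  · rintro ⟨⟨a, b⟩, ⟨c, d⟩⟩ hab
    change ((a, b), c, d) ∈ (_ : Finset ((ℕ × ℕ) × ℕ × ℕ)) at hab
    simp only [Finset.mem_coe, Finset.mem_filter, Finset.mem_product, Finset.mem_range] at hab ⊢
    obtain ⟨⟨⟨ha, hb⟩, h1⟩, ⟨hc, hd⟩, h2⟩ := hab
    have hma : (a + p * c) % p = a := by rw [Nat.add_mul_mod_self_left, Nat.mod_eq_of_lt ha]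
    have hmb : (b + p * d) % p = b := by rw [Nat.add_mul_mod_self_left, Nat.mod_eq_of_lt hb]
    have hda : (a + p * c) / p = c := by rw [Nat.add_mul_div_left _ _ hp0, Nat.div_eq_of_lt ha, Nat.zero_add]
    have hdb : (b + p * d) / p = d := by rw [Nat.add_mul_div_left _ _ hp0, Nat.div_eq_of_lt hb, Nat.zero_add]
    constructor
    · constructor
      · calc a + p * c < p * (c + 1) := by rw [Nat.mul_add, Nat.mul_one]; omega
          _ ≤ p * p ^ r := Nat.mul_le_mul_left p hc
          _ = p ^ (r + 1) := (pow_succ' p r).symm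
      · calc b + p * d < p * (d + 1) := by rw [Nat.mul_add, Nat.mul_one]; omega
          _ ≤ p * p ^ r := Nat.mul_le_mul_left p hd
          _ = p ^ (r + 1) := (pow_succ' p r).symm
    · rw [dvd_choose_lucas_iff p hp, hma, hmb, hda, hdb]
      push_neg
      exact ⟨h1, h2⟩
  · rintro ⟨i, j⟩ _
    simp [Nat.mod_add_div]
  · rintro ⟨⟨a, b⟩, ⟨c, d⟩⟩ hab
    change ((a, b), c, d) ∈ (_ : Finset ((ℕ × ℕ) × ℕ × ℕ)) at hab
    simp only [Finset.mem_coe, Finset.mem_filter, Finset.mem_product, Finset.mem_range] at hab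
    obtain ⟨⟨⟨ha, hb⟩, _⟩, _⟩ := hab
    simp [Nat.add_mul_mod_self_left, Nat.mod_eq_of_lt ha, Nat.mod_eq_of_lt hb,
      Nat.add_mul_div_left _ _ hp0, Nat.div_eq_of_lt ha, Nat.div_eq_of_lt hb]

theorem count_nonzero_binom_pow (p r : ℕ) (hp : p.Prime) (hr : 1 ≤ r) :
    ((Finset.range (p ^ r) ×ˢ Finset.range (p ^ r)).filter
      (fun ij => ¬ p ∣ (ij.2).choose ij.1)).card = (p * (p + 1) / 2) ^ r := by
  induction r with
  | zero => omega
  | succ n ih =>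
    rcases Nat.eq_zero_or_pos n with h0 | hn
    · subst h0
      simpa using base_case p hp
    · rw [step_case p hp n, base_case p hp, ih hn, pow_succ, mul_comm]
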